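/- Let φ : ℝ⁵ → ℝ be C³ and assume that the function L₁(Ā₁) − L̄₁(A₁) vanishes nowhere on ℝ⁵. Set k := −( L₂(Ā₁) − L̄₁(A₂) ) / ( L₁(Ā₁) − L̄₁(A₁) ) and define the operator K f := k·(L₁ f) + L₂ f. Then for every C² function f : ℝ⁵ → ℂ: [K, L₁] f = −L₁(k)·(L₁ f) and [K, L̄₁] f = −L̄₁(k)·(L₁ f). (These are the brackets [K, L₁] = −L₁(k)·L₁ and [K, L̄₁] = −L̄₁(k)·L₁ involving the Levi-kernel field K of General Class IV₂; the second cancellation uses the defining property of k.) -/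

import Mathlib

noncomputable section
open Complex ComplexConjugate

/-- Points of `ℝ⁵`, with coordinates `(x₁, y₁, x₂, y₂, u)`, `z₁ = x₁ + i y₁`,
`z₂ = x₂ + i y₂`. -/
abbrev V5 := Fin 5 → ℝ

/-- Partial derivative in the `j`-th coordinate direction. -/
def pd (j : Fin 5) (f : V5 → ℂ) : V5 → ℂ := fun p => fderiv ℝ f p (Pi.single j 1)

lemma contDiff_pd {n : WithTop ℕ∞} {f : V5 → ℂ} (hf : ContDiff ℝ (n+1) f) (j : Fin 5) :
    ContDiff ℝ n (pd j f) := by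
  have : pd j f = (fun L : V5 →L[ℝ] ℂ => L (Pi.single j 1)) ∘ (fderiv ℝ f) := rfl
  rw [this]
  exact (ContinuousLinearMap.apply ℝ ℂ (Pi.single j (1:ℝ))).contDiff.comp
    (hf.fderiv_right le_rfl)

lemma diff_pd {f : V5 → ℂ} (hf : ContDiff ℝ 2 f) (j : Fin 5) :
    Differentiable ℝ (pd j f) := by
  have h : ContDiff ℝ 1 (pd j f) := contDiff_pd (by exact_mod_cast hf) j
  exact h.differentiable one_ne_zero

lemma pd_add {f g : V5 → ℂ} {p : V5} (hf : DifferentiableAt ℝ f p)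
    (hg : DifferentiableAt ℝ g p) (j : Fin 5) :
    pd j (fun q => f q + g q) p = pd j f p + pd j g p := by
  simp [pd, fderiv_fun_add hf hg]

lemma pd_sub {f g : V5 → ℂ} {p : V5} (hf : DifferentiableAt ℝ f p)
    (hg : DifferentiableAt ℝ g p) (j : Fin 5) :
    pd j (fun q => f q - g q) p = pd j f p - pd j g p := by
  simp [pd, fderiv_fun_sub hf hg]

lemma pd_neg {f : V5 → ℂ} {p : V5} (j : Fin 5) :
    pd j (fun q => -f q) p = -pd j f p := by
  simp [pd, fderiv_neg]

lemma pd_mul {f g : V5 → ℂ} {p : V5} (hf : DifferentiableAt ℝ f p)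
    (hg : DifferentiableAt ℝ g p) (j : Fin 5) :
    pd j (fun q => f q * g q) p = pd j f p * g p + f p * pd j g p := by
  simp [pd, fderiv_fun_mul hf hg]; ring

lemma pd_const (c : ℂ) (j : Fin 5) (p : V5) : pd j (fun _ => c) p = 0 := by
  simp [pd]

lemma pd_const_mul {f : V5 → ℂ} {p : V5} (hf : DifferentiableAt ℝ f p) (c : ℂ) (j : Fin 5) :
    pd j (fun q => c * f q) p = c * pd j f p := by
  simp [pd, fderiv_const_mul hf]

lemma pd_const_add {f : V5 → ℂ} {p : V5} (hf : DifferentiableAt ℝ f p) (c : ℂ) (j : Fin 5) :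
    pd j (fun q => c + f q) p = pd j f p := by
  simp [pd, fderiv_const_add]

lemma pd_div_const {f : V5 → ℂ} {p : V5} (hf : DifferentiableAt ℝ f p) (c : ℂ) (j : Fin 5) :
    pd j (fun q => f q / c) p = pd j f p / c := by
  simp only [div_eq_mul_inv, pd, fderiv_mul_const hf]
  simp [mul_comm]

lemma pd_inv {g : V5 → ℂ} {p : V5} (hg : DifferentiableAt ℝ g p) (hg0 : g p ≠ 0) (j : Fin 5) :
    pd j (fun q => (g q)⁻¹) p = -pd j g p / (g p)^2 := by
  have hcomp : HasFDerivAt (fun q => (g q)⁻¹)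
      ((-ContinuousLinearMap.mulLeftRight ℝ ℂ (g p)⁻¹ (g p)⁻¹).comp (fderiv ℝ g p)) p :=
    (hasFDerivAt_inv' hg0).comp p hg.hasFDerivAt
  rw [pd, hcomp.fderiv]
  simp only [ContinuousLinearMap.coe_comp', Function.comp_apply,
    ContinuousLinearMap.neg_apply, ContinuousLinearMap.mulLeftRight_apply]
  field_simp [pd]
  rfl

lemma pd_div {f g : V5 → ℂ} {p : V5} (hf : DifferentiableAt ℝ f p)
    (hg : DifferentiableAt ℝ g p) (hg0 : g p ≠ 0) (j : Fin 5) :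
    pd j (fun q => f q / g q) p
      = (pd j f p * g p - f p * pd j g p) / (g p)^2 := by
  have h1 : pd j (fun q => f q * (g q)⁻¹) p
      = pd j f p * (g p)⁻¹ + f p * pd j (fun q => (g q)⁻¹) p :=
    pd_mul hf (hg.inv hg0) j
  simp only [div_eq_mul_inv] at *
  rw [h1, pd_inv hg hg0]
  field_simp
  ring

lemma pd_sum {ι : Type*} (s : Finset ι) {g : ι → V5 → ℂ} {p : V5}
    (hg : ∀ i ∈ s, DifferentiableAt ℝ (g i) p) (j : Fin 5) :
    pd j (fun q => ∑ i ∈ s, g i q) p = ∑ i ∈ s, pd j (g i) p := by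
  simp [pd, fderiv_fun_sum hg]

lemma pd_comm {f : V5 → ℂ} (hf : ContDiff ℝ 2 f) (i j : Fin 5) (p : V5) :
    pd i (pd j f) p = pd j (pd i f) p := by
  have hd : DifferentiableAt ℝ (fderiv ℝ f) p :=
    ((hf.fderiv_right (m := 1) (by norm_num)).differentiable one_ne_zero).differentiableAt
  have hsymm : IsSymmSndFDerivAt ℝ f p := hf.contDiffAt.isSymmSndFDerivAt (by norm_num)
  have key : ∀ (ii : Fin 5) (v : V5), pd ii (fun q => fderiv ℝ f q v) p
      = fderiv ℝ (fderiv ℝ f) p (Pi.single ii 1) v := by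
    intro ii v
    have h1 : (fun q => fderiv ℝ f q v)
        = (ContinuousLinearMap.apply ℝ ℂ v : (V5 →L[ℝ] ℂ) →L[ℝ] ℂ) ∘ (fderiv ℝ f) := rfl
    rw [pd, h1, fderiv_comp p (ContinuousLinearMap.apply ℝ ℂ v).differentiableAt hd]
    simp
  show pd i (fun q => fderiv ℝ f q _) p = pd j (fun q => fderiv ℝ f q _) p
  rw [key, key]
  exact hsymm _ _

def vf (a : V5 → Fin 5 → ℂ) (f : V5 → ℂ) : V5 → ℂ := fun p => ∑ j, a p j * pd j f p

lemma vf_comm {a b : V5 → Fin 5 → ℂ} {f : V5 → ℂ}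
    (ha : ∀ j, Differentiable ℝ (fun q => a q j))
    (hb : ∀ j, Differentiable ℝ (fun q => b q j))
    (hf : ContDiff ℝ 2 f) (p : V5) :
    vf a (vf b f) p - vf b (vf a f) p
      = ∑ m, (vf a (fun q => b q m) p - vf b (fun q => a q m) p) * pd m f p := by
  have hpdf : ∀ m, Differentiable ℝ (pd m f) := diff_pd hf
  have expand : ∀ (a b : V5 → Fin 5 → ℂ), (∀ j, Differentiable ℝ (fun q => a q j)) →
      (∀ j, Differentiable ℝ (fun q => b q j)) →
      vf a (vf b f) p = (∑ j, ∑ m, a p j * (pd j (fun q => b q m) p * pd m f p))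
        + ∑ j, ∑ m, a p j * (b p m * pd j (pd m f) p) := by
    intro a b ha hb
    have h1 : ∀ j : Fin 5, pd j (vf b f) p
        = ∑ m, (pd j (fun q => b q m) p * pd m f p + b p m * pd j (pd m f) p) := by
      intro j
      have h2 : pd j (fun q => ∑ m, b q m * pd m f q) p
          = ∑ m, pd j (fun q => b q m * pd m f q) p :=
        pd_sum Finset.univ (fun m _ => ((hb m) p).mul ((hpdf m) p)) j
      show pd j (fun q => ∑ m, b q m * pd m f q) p = _
      rw [h2]
      exact Finset.sum_congr rfl fun m _ => pd_mul ((hb m) p) ((hpdf m) p) j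
    simp only [vf, h1, Finset.mul_sum, mul_add, Finset.sum_add_distrib]
  have swap : ∑ j, ∑ m, a p j * (b p m * pd j (pd m f) p)
      = ∑ j, ∑ m, b p j * (a p m * pd j (pd m f) p) := by
    rw [Finset.sum_comm]
    refine Finset.sum_congr rfl fun j _ => Finset.sum_congr rfl fun m _ => ?_
    rw [pd_comm hf m j p]
    ring
  have r1 : ∀ (a b : V5 → Fin 5 → ℂ),
      ∑ j, ∑ m, a p j * (pd j (fun q => b q m) p * pd m f p)
        = ∑ m, vf a (fun q => b q m) p * pd m f p := by
    intro a b
    rw [Finset.sum_comm]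
    refine Finset.sum_congr rfl fun m _ => ?_
    simp [vf, Finset.sum_mul, mul_assoc]
  rw [expand a b ha hb, expand b a hb ha, r1 a b, r1 b a, swap]
  simp only [sub_mul, Finset.sum_sub_distrib]
  ring

/-- Wirtinger derivative `f_{z₁} := (f_{x₁} − i f_{y₁})/2`. -/
def wz1 (f : V5 → ℂ) : V5 → ℂ := fun p => (pd 0 f p - I * pd 1 f p) / 2

/-- Wirtinger derivative `f_{z̄₁} := (f_{x₁} + i f_{y₁})/2`. -/
def wzb1 (f : V5 → ℂ) : V5 → ℂ := fun p => (pd 0 f p + I * pd 1 f p) / 2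

/-- Wirtinger derivative `f_{z₂} := (f_{x₂} − i f_{y₂})/2`. -/
def wz2 (f : V5 → ℂ) : V5 → ℂ := fun p => (pd 2 f p - I * pd 3 f p) / 2

/-- Wirtinger derivative `f_{z̄₂} := (f_{x₂} + i f_{y₂})/2`. -/
def wzb2 (f : V5 → ℂ) : V5 → ℂ := fun p => (pd 2 f p + I * pd 3 f p) / 2

/-- Partial derivative `f_u`. -/
def du (f : V5 → ℂ) : V5 → ℂ := pd 4 f

/-- Complexification of a real-valued function. -/
def cl (φ : V5 → ℝ) : V5 → ℂ := fun p => (φ p : ℂ)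

variable (φ : V5 → ℝ)

/-- The coefficient `A₁ := −φ_{z₁}/(i + φ_u)`. -/
def A1 : V5 → ℂ := fun p => -(wz1 (cl φ) p) / (I + du (cl φ) p)

/-- The coefficient `A₂ := −φ_{z₂}/(i + φ_u)`. -/
def A2 : V5 → ℂ := fun p => -(wz2 (cl φ) p) / (I + du (cl φ) p)

/-- The operator `L₁ f := f_{z₁} + A₁ f_u`. -/
def L1 (f : V5 → ℂ) : V5 → ℂ := fun p => wz1 f p + A1 φ p * du f p

/-- The operator `L₂ f := f_{z₂} + A₂ f_u`. -/
def L2 (f : V5 → ℂ) : V5 → ℂ := fun p => wz2 f p + A2 φ p * du f p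

/-- The conjugate operator `L̄₁ f := f_{z̄₁} + Ā₁ f_u`. -/
def Lb1 (f : V5 → ℂ) : V5 → ℂ := fun p => wzb1 f p + conj (A1 φ p) * du f p

/-- The conjugate operator `L̄₂ f := f_{z̄₂} + Ā₂ f_u`. -/
def Lb2 (f : V5 → ℂ) : V5 → ℂ := fun p => wzb2 f p + conj (A2 φ p) * du f p

section smooth
variable {φ}

lemma contDiff_cl (hφ : ContDiff ℝ 3 φ) : ContDiff ℝ 3 (cl φ) :=
  Complex.ofRealCLM.contDiff.comp hφ

lemma pd_cl (hφ : ContDiff ℝ 3 φ) (j : Fin 5) (p : V5) :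
    pd j (cl φ) p = ((fderiv ℝ φ p (Pi.single j 1) : ℝ) : ℂ) := by
  have h : HasFDerivAt (cl φ) (Complex.ofRealCLM.comp (fderiv ℝ φ p)) p :=
    (Complex.ofRealCLM.hasFDerivAt).comp p
      (hφ.differentiable (by norm_num)).differentiableAt.hasFDerivAt
  rw [pd, h.fderiv]
  rfl

lemma G_ne (hφ : ContDiff ℝ 3 φ) (p : V5) : I + du (cl φ) p ≠ 0 := by
  intro h
  have him : (I + du (cl φ) p).im = 0 := by rw [h]; rfl
  rw [du, pd_cl hφ] at him
  simp [Complex.add_im] at him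

lemma contDiff_wz1 {n : WithTop ℕ∞} {f : V5 → ℂ} (hf : ContDiff ℝ (n+1) f) :
    ContDiff ℝ n (wz1 f) :=
  ((contDiff_pd hf 0).sub (contDiff_const.mul (contDiff_pd hf 1))).div_const 2

lemma contDiff_wzb1 {n : WithTop ℕ∞} {f : V5 → ℂ} (hf : ContDiff ℝ (n+1) f) :
    ContDiff ℝ n (wzb1 f) :=
  ((contDiff_pd hf 0).add (contDiff_const.mul (contDiff_pd hf 1))).div_const 2

lemma contDiff_wz2 {n : WithTop ℕ∞} {f : V5 → ℂ} (hf : ContDiff ℝ (n+1) f) :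
    ContDiff ℝ n (wz2 f) :=
  ((contDiff_pd hf 2).sub (contDiff_const.mul (contDiff_pd hf 3))).div_const 2

lemma contDiff_du {n : WithTop ℕ∞} {f : V5 → ℂ} (hf : ContDiff ℝ (n+1) f) :
    ContDiff ℝ n (du f) := contDiff_pd hf 4

lemma contDiff_G (hφ : ContDiff ℝ 3 φ) : ContDiff ℝ 2 (fun p => I + du (cl φ) p) :=
  contDiff_const.add (contDiff_du (by exact_mod_cast contDiff_cl hφ))

lemma contDiff_div' {n : WithTop ℕ∞} {f g : V5 → ℂ} (hf : ContDiff ℝ n f)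
    (hg : ContDiff ℝ n g) (h0 : ∀ p, g p ≠ 0) :
    ContDiff ℝ n (fun p => f p / g p) := by
  simp only [div_eq_mul_inv]
  exact hf.mul (hg.inv h0)

lemma contDiff_A1 (hφ : ContDiff ℝ 3 φ) : ContDiff ℝ 2 (A1 φ) :=
  contDiff_div' ((contDiff_wz1 (n := 2) (by exact_mod_cast contDiff_cl hφ)).neg)
    (contDiff_G hφ) (G_ne hφ)

lemma contDiff_A2 (hφ : ContDiff ℝ 3 φ) : ContDiff ℝ 2 (A2 φ) :=
  contDiff_div' ((contDiff_wz2 (n := 2) (by exact_mod_cast contDiff_cl hφ)).neg)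
    (contDiff_G hφ) (G_ne hφ)

lemma contDiff_conj {n : WithTop ℕ∞} {f : V5 → ℂ} (hf : ContDiff ℝ n f) :
    ContDiff ℝ n (fun q => conj (f q)) := by
  have : (fun q => conj (f q)) = (Complex.conjCLE : ℂ ≃L[ℝ] ℂ) ∘ f := by
    funext q; simp
  rw [this]
  exact (Complex.conjCLE : ℂ ≃L[ℝ] ℂ).toContinuousLinearMap.contDiff.comp hf

lemma contDiff_L1 {n : WithTop ℕ∞} {f : V5 → ℂ} (hφ : ContDiff ℝ 3 φ)
    (hn : n ≤ 1) (hf : ContDiff ℝ (n+1) f) : ContDiff ℝ n (L1 φ f) :=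
  (contDiff_wz1 hf).add
    (((contDiff_A1 hφ).of_le (by exact hn.trans (by norm_num))).mul (contDiff_du hf))

lemma contDiff_L2 {n : WithTop ℕ∞} {f : V5 → ℂ} (hφ : ContDiff ℝ 3 φ)
    (hn : n ≤ 1) (hf : ContDiff ℝ (n+1) f) : ContDiff ℝ n (L2 φ f) :=
  (contDiff_wz2 hf).add
    (((contDiff_A2 hφ).of_le (by exact hn.trans (by norm_num))).mul (contDiff_du hf))

lemma contDiff_Lb1 {n : WithTop ℕ∞} {f : V5 → ℂ} (hφ : ContDiff ℝ 3 φ)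
    (hn : n ≤ 1) (hf : ContDiff ℝ (n+1) f) : ContDiff ℝ n (Lb1 φ f) :=
  (contDiff_wzb1 hf).add
    (((contDiff_conj (contDiff_A1 hφ)).of_le (by exact hn.trans (by norm_num))).mul
      (contDiff_du hf))

end smooth

section keyid
variable {φ}

lemma pd_A1 (hφ : ContDiff ℝ 3 φ) (j : Fin 5) (p : V5) :
    pd j (A1 φ) p = (-(pd j (wz1 (cl φ)) p) * (I + du (cl φ) p)
        + wz1 (cl φ) p * pd j (du (cl φ)) p) / (I + du (cl φ) p)^2 := by
  have hPd : DifferentiableAt ℝ (wz1 (cl φ)) p :=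
    ((contDiff_wz1 (n := 2) (by exact_mod_cast contDiff_cl hφ)).differentiable
      (by norm_num)) p
  have hGd : DifferentiableAt ℝ (fun q => I + du (cl φ) q) p :=
    ((contDiff_G hφ).differentiable (by norm_num)) p
  have h := pd_div (f := fun q => -wz1 (cl φ) q) (g := fun q => I + du (cl φ) q)
    (hPd.neg) hGd (G_ne hφ p) j
  have e : pd j (A1 φ) p = pd j (fun q => -wz1 (cl φ) q / (I + du (cl φ) q)) p := rfl
  rw [e, h, pd_neg, pd_const_add ((contDiff_du (n := 2)
    (by exact_mod_cast contDiff_cl hφ)).differentiable (by norm_num) p) I j]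
  ring

lemma pd_A2 (hφ : ContDiff ℝ 3 φ) (j : Fin 5) (p : V5) :
    pd j (A2 φ) p = (-(pd j (wz2 (cl φ)) p) * (I + du (cl φ) p)
        + wz2 (cl φ) p * pd j (du (cl φ)) p) / (I + du (cl φ) p)^2 := by
  have hQd : DifferentiableAt ℝ (wz2 (cl φ)) p :=
    ((contDiff_wz2 (n := 2) (by exact_mod_cast contDiff_cl hφ)).differentiable
      (by norm_num)) p
  have hGd : DifferentiableAt ℝ (fun q => I + du (cl φ) q) p :=
    ((contDiff_G hφ).differentiable (by norm_num)) p
  have h := pd_div (f := fun q => -wz2 (cl φ) q) (g := fun q => I + du (cl φ) q)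
    (hQd.neg) hGd (G_ne hφ p) j
  have e : pd j (A2 φ) p = pd j (fun q => -wz2 (cl φ) q / (I + du (cl φ) q)) p := rfl
  rw [e, h, pd_neg, pd_const_add ((contDiff_du (n := 2)
    (by exact_mod_cast contDiff_cl hφ)).differentiable (by norm_num) p) I j]
  ring

lemma L2A1_eq_L1A2 (hφ : ContDiff ℝ 3 φ) (p : V5) :
    L2 φ (A1 φ) p = L1 φ (A2 φ) p := by
  have hc3 : ContDiff ℝ 3 (cl φ) := contDiff_cl hφ
  have hc2 : ContDiff ℝ 2 (cl φ) := hc3.of_le (by norm_num)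
  have hpdcd : ∀ m : Fin 5, Differentiable ℝ (pd m (cl φ)) := fun m =>
    (contDiff_pd (n := 2) (by exact_mod_cast hc3) m).differentiable (by norm_num)
  have hsym : ∀ j m : Fin 5, pd j (pd m (cl φ)) p = pd m (pd j (cl φ)) p :=
    fun j m => pd_comm hc2 j m p
  have epdP : ∀ j : Fin 5, pd j (wz1 (cl φ)) p
      = (pd j (pd 0 (cl φ)) p - I * pd j (pd 1 (cl φ)) p) / 2 := by
    intro j
    have e : pd j (wz1 (cl φ)) p
        = pd j (fun q => (pd 0 (cl φ) q - I * pd 1 (cl φ) q) / 2) p := rfl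
    rw [e, pd_div_const (f := fun q => pd 0 (cl φ) q - I * pd 1 (cl φ) q) ((hpdcd 0 p).sub ((hpdcd 1 p).const_mul I)) 2 j,
      pd_sub (hpdcd 0 p) ((hpdcd 1 p).const_mul I) j, pd_const_mul (hpdcd 1 p) I j]
  have epdQ : ∀ j : Fin 5, pd j (wz2 (cl φ)) p
      = (pd j (pd 2 (cl φ)) p - I * pd j (pd 3 (cl φ)) p) / 2 := by
    intro j
    have e : pd j (wz2 (cl φ)) p
        = pd j (fun q => (pd 2 (cl φ) q - I * pd 3 (cl φ) q) / 2) p := rfl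
    rw [e, pd_div_const (f := fun q => pd 2 (cl φ) q - I * pd 3 (cl φ) q) ((hpdcd 2 p).sub ((hpdcd 3 p).const_mul I)) 2 j,
      pd_sub (hpdcd 2 p) ((hpdcd 3 p).const_mul I) j, pd_const_mul (hpdcd 3 p) I j]
  have epdG : ∀ j : Fin 5, pd j (du (cl φ)) p = pd j (pd 4 (cl φ)) p := fun j => rfl
  have hG0 : (I + du (cl φ) p) ≠ 0 := G_ne hφ p
  have e1 : L2 φ (A1 φ) p
      = (pd 2 (A1 φ) p - I * pd 3 (A1 φ) p) / 2 + A2 φ p * pd 4 (A1 φ) p := rfl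
  have e2 : L1 φ (A2 φ) p
      = (pd 0 (A2 φ) p - I * pd 1 (A2 φ) p) / 2 + A1 φ p * pd 4 (A2 φ) p := rfl
  have eA1 : A1 φ p = -(wz1 (cl φ) p) / (I + du (cl φ) p) := rfl
  have eA2 : A2 φ p = -(wz2 (cl φ) p) / (I + du (cl φ) p) := rfl
  rw [e1, e2, pd_A1 hφ 2 p, pd_A1 hφ 3 p, pd_A1 hφ 4 p,
    pd_A2 hφ 0 p, pd_A2 hφ 1 p, pd_A2 hφ 4 p, eA1, eA2,
    epdP 2, epdP 3, epdP 4, epdQ 0, epdQ 1, epdQ 4,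
    epdG 0, epdG 1, epdG 2, epdG 3, epdG 4,
    hsym 2 0, hsym 2 1, hsym 3 0, hsym 3 1, hsym 4 0, hsym 4 1, hsym 4 2, hsym 4 3]
  have edu : du (cl φ) p = pd 4 (cl φ) p := rfl
  have ewz1 : wz1 (cl φ) p = (pd 0 (cl φ) p - I * pd 1 (cl φ) p) / 2 := rfl
  have ewz2 : wz2 (cl φ) p = (pd 2 (cl φ) p - I * pd 3 (cl φ) p) / 2 := rfl
  rw [edu] at hG0 ⊢
  field_simp
  ring
end keyid

section assemble
variable {φ}

def cL1 (φ : V5 → ℝ) : V5 → Fin 5 → ℂ := fun p => ![(1:ℂ)/2, -I/2, 0, 0, A1 φ p]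
def cL2 (φ : V5 → ℝ) : V5 → Fin 5 → ℂ := fun p => ![0, 0, (1:ℂ)/2, -I/2, A2 φ p]
def cLb1 (φ : V5 → ℝ) : V5 → Fin 5 → ℂ :=
  fun p => ![(1:ℂ)/2, I/2, 0, 0, conj (A1 φ p)]

lemma vf_const (a : V5 → Fin 5 → ℂ) (c : ℂ) (p : V5) : vf a (fun _ => c) p = 0 := by
  simp [vf, pd_const]

lemma L1_vf (f : V5 → ℂ) (p : V5) : L1 φ f p = vf (cL1 φ) f p := by
  simp [L1, vf, wz1, du, Fin.sum_univ_five, cL1]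
  ring

lemma L2_vf (f : V5 → ℂ) (p : V5) : L2 φ f p = vf (cL2 φ) f p := by
  simp [L2, vf, wz2, du, Fin.sum_univ_five, cL2]
  ring

lemma Lb1_vf (f : V5 → ℂ) (p : V5) : Lb1 φ f p = vf (cLb1 φ) f p := by
  simp [Lb1, vf, wzb1, du, Fin.sum_univ_five, cLb1]
  ring

lemma diff_cL1 (hφ : ContDiff ℝ 3 φ) (j : Fin 5) :
    Differentiable ℝ (fun q => cL1 φ q j) := by
  have h := (contDiff_A1 hφ).differentiable (by norm_num)
  fin_cases j <;> simp [cL1] <;> first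
    | exact differentiable_const _
    | exact h

lemma diff_cL2 (hφ : ContDiff ℝ 3 φ) (j : Fin 5) :
    Differentiable ℝ (fun q => cL2 φ q j) := by
  have h := (contDiff_A2 hφ).differentiable (by norm_num)
  fin_cases j <;> simp [cL2] <;> first
    | exact differentiable_const _
    | exact h

lemma diff_cLb1 (hφ : ContDiff ℝ 3 φ) (j : Fin 5) :
    Differentiable ℝ (fun q => cLb1 φ q j) := by
  have h := (contDiff_conj (contDiff_A1 hφ)).differentiable (by norm_num)
  fin_cases j <;> simp [cLb1] <;> first
    | exact differentiable_const _
    | exact h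

lemma bracket_L2L1 (hφ : ContDiff ℝ 3 φ) {f : V5 → ℂ} (hf : ContDiff ℝ 2 f) (p : V5) :
    L2 φ (L1 φ f) p - L1 φ (L2 φ f) p
      = (L2 φ (A1 φ) p - L1 φ (A2 φ) p) * du f p := by
  have e1 : L1 φ f = vf (cL1 φ) f := funext fun q => L1_vf f q
  have e2 : L2 φ f = vf (cL2 φ) f := funext fun q => L2_vf f q
  rw [L2_vf (L1 φ f) p, L1_vf (L2 φ f) p, e1, e2,
    vf_comm (diff_cL2 hφ) (diff_cL1 hφ) hf p, Fin.sum_univ_five]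
  simp only [cL1, cL2, Matrix.cons_val_zero, Matrix.cons_val_one, Matrix.head_cons,
    Matrix.cons_val_two, Matrix.tail_cons, Matrix.cons_val_three, Matrix.cons_val_four]
  have h4a : vf (cL2 φ) (fun q => A1 φ q) p = L2 φ (A1 φ) p := (L2_vf _ p).symm
  have h4b : vf (cL1 φ) (fun q => A2 φ q) p = L1 φ (A2 φ) p := (L1_vf _ p).symm
  rw [h4a, h4b]
  simp only [vf_const]
  show _ = _ * pd 4 f p
  ring

lemma bracket_L1Lb1 (hφ : ContDiff ℝ 3 φ) {f : V5 → ℂ} (hf : ContDiff ℝ 2 f) (p : V5) :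
    L1 φ (Lb1 φ f) p - Lb1 φ (L1 φ f) p
      = (L1 φ (fun q => conj (A1 φ q)) p - Lb1 φ (A1 φ) p) * du f p := by
  have e1 : L1 φ f = vf (cL1 φ) f := funext fun q => L1_vf f q
  have e2 : Lb1 φ f = vf (cLb1 φ) f := funext fun q => Lb1_vf f q
  rw [L1_vf (Lb1 φ f) p, Lb1_vf (L1 φ f) p, e1, e2,
    vf_comm (diff_cL1 hφ) (diff_cLb1 hφ) hf p, Fin.sum_univ_five]
  simp only [cL1, cLb1, Matrix.cons_val_zero, Matrix.cons_val_one, Matrix.head_cons,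
    Matrix.cons_val_two, Matrix.tail_cons, Matrix.cons_val_three, Matrix.cons_val_four]
  have h4a : vf (cL1 φ) (fun q => conj (A1 φ q)) p
      = L1 φ (fun q => conj (A1 φ q)) p := (L1_vf _ p).symm
  have h4b : vf (cLb1 φ) (fun q => A1 φ q) p = Lb1 φ (A1 φ) p := (Lb1_vf _ p).symm
  rw [h4a, h4b]
  simp only [vf_const]
  show _ = _ * pd 4 f p
  ring

lemma bracket_L2Lb1 (hφ : ContDiff ℝ 3 φ) {f : V5 → ℂ} (hf : ContDiff ℝ 2 f) (p : V5) :
    L2 φ (Lb1 φ f) p - Lb1 φ (L2 φ f) p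
      = (L2 φ (fun q => conj (A1 φ q)) p - Lb1 φ (A2 φ) p) * du f p := by
  have e1 : L2 φ f = vf (cL2 φ) f := funext fun q => L2_vf f q
  have e2 : Lb1 φ f = vf (cLb1 φ) f := funext fun q => Lb1_vf f q
  rw [L2_vf (Lb1 φ f) p, Lb1_vf (L2 φ f) p, e1, e2,
    vf_comm (diff_cL2 hφ) (diff_cLb1 hφ) hf p, Fin.sum_univ_five]
  simp only [cL2, cLb1, Matrix.cons_val_zero, Matrix.cons_val_one, Matrix.head_cons,
    Matrix.cons_val_two, Matrix.tail_cons, Matrix.cons_val_three, Matrix.cons_val_four]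
  have h4a : vf (cL2 φ) (fun q => conj (A1 φ q)) p
      = L2 φ (fun q => conj (A1 φ q)) p := (L2_vf _ p).symm
  have h4b : vf (cLb1 φ) (fun q => A2 φ q) p = Lb1 φ (A2 φ) p := (Lb1_vf _ p).symm
  rw [h4a, h4b]
  simp only [vf_const]
  show _ = _ * pd 4 f p
  ring

end assemble


/-- The fundamental function `k := −( L₂(Ā₁) − L̄₁(A₂) ) / ( L₁(Ā₁) − L̄₁(A₁) )`. -/
def kf : V5 → ℂ := fun p =>
  -(L2 φ (fun q => conj (A1 φ q)) p - Lb1 φ (A2 φ) p)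
    / (L1 φ (fun q => conj (A1 φ q)) p - Lb1 φ (A1 φ) p)

/-- The Levi-kernel field `K f := k·(L₁ f) + L₂ f`. -/
def Kof (f : V5 → ℂ) : V5 → ℂ := fun p => kf φ p * L1 φ f p + L2 φ f p

section final
variable {φ}

lemma L1_add {g h : V5 → ℂ} {p : V5} (hg : DifferentiableAt ℝ g p)
    (hh : DifferentiableAt ℝ h p) :
    L1 φ (fun q => g q + h q) p = L1 φ g p + L1 φ h p := by
  have e : ∀ k : V5 → ℂ, L1 φ k p
      = (pd 0 k p - I * pd 1 k p) / 2 + A1 φ p * pd 4 k p := fun k => rfl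
  rw [e, e, e, pd_add hg hh 0, pd_add hg hh 1, pd_add hg hh 4]
  ring

lemma L1_mul {g h : V5 → ℂ} {p : V5} (hg : DifferentiableAt ℝ g p)
    (hh : DifferentiableAt ℝ h p) :
    L1 φ (fun q => g q * h q) p = L1 φ g p * h p + g p * L1 φ h p := by
  have e : ∀ k : V5 → ℂ, L1 φ k p
      = (pd 0 k p - I * pd 1 k p) / 2 + A1 φ p * pd 4 k p := fun k => rfl
  rw [e, e, e, pd_mul hg hh 0, pd_mul hg hh 1, pd_mul hg hh 4]
  ring

lemma Lb1_add {g h : V5 → ℂ} {p : V5} (hg : DifferentiableAt ℝ g p)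
    (hh : DifferentiableAt ℝ h p) :
    Lb1 φ (fun q => g q + h q) p = Lb1 φ g p + Lb1 φ h p := by
  have e : ∀ k : V5 → ℂ, Lb1 φ k p
      = (pd 0 k p + I * pd 1 k p) / 2 + conj (A1 φ p) * pd 4 k p := fun k => rfl
  rw [e, e, e, pd_add hg hh 0, pd_add hg hh 1, pd_add hg hh 4]
  ring

lemma Lb1_mul {g h : V5 → ℂ} {p : V5} (hg : DifferentiableAt ℝ g p)
    (hh : DifferentiableAt ℝ h p) :
    Lb1 φ (fun q => g q * h q) p = Lb1 φ g p * h p + g p * Lb1 φ h p := by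
  have e : ∀ k : V5 → ℂ, Lb1 φ k p
      = (pd 0 k p + I * pd 1 k p) / 2 + conj (A1 φ p) * pd 4 k p := fun k => rfl
  rw [e, e, e, pd_mul hg hh 0, pd_mul hg hh 1, pd_mul hg hh 4]
  ring

lemma contDiff_kf (hφ : ContDiff ℝ 3 φ)
    (h0 : ∀ p, L1 φ (fun q => conj (A1 φ q)) p - Lb1 φ (A1 φ) p ≠ 0) :
    ContDiff ℝ 1 (kf φ) := by
  have hcA1 : ContDiff ℝ (1+1) (fun q => conj (A1 φ q)) :=
    (contDiff_conj (contDiff_A1 hφ)).of_le (by norm_num)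
  have hA2 : ContDiff ℝ (1+1) (A2 φ) := (contDiff_A2 hφ).of_le (by norm_num)
  have hA1 : ContDiff ℝ (1+1) (A1 φ) := (contDiff_A1 hφ).of_le (by norm_num)
  have hN : ContDiff ℝ 1 (fun p =>
      -(L2 φ (fun q => conj (A1 φ q)) p - Lb1 φ (A2 φ) p)) :=
    ((contDiff_L2 hφ le_rfl hcA1).sub (contDiff_Lb1 hφ le_rfl hA2)).neg
  have hD : ContDiff ℝ 1 (fun p =>
      L1 φ (fun q => conj (A1 φ q)) p - Lb1 φ (A1 φ) p) :=
    (contDiff_L1 hφ le_rfl hcA1).sub (contDiff_Lb1 hφ le_rfl hA1)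
  exact contDiff_div' hN hD h0

lemma kf_rel (h0 : ∀ p, L1 φ (fun q => conj (A1 φ q)) p - Lb1 φ (A1 φ) p ≠ 0) (p : V5) :
    kf φ p * (L1 φ (fun q => conj (A1 φ q)) p - Lb1 φ (A1 φ) p)
      + (L2 φ (fun q => conj (A1 φ q)) p - Lb1 φ (A2 φ) p) = 0 := by
  have e : kf φ p = -(L2 φ (fun q => conj (A1 φ q)) p - Lb1 φ (A2 φ) p)
      / (L1 φ (fun q => conj (A1 φ q)) p - Lb1 φ (A1 φ) p) := rfl
  rw [e, neg_div, neg_mul, div_mul_cancel₀ _ (h0 p)]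
  ring

end final


/-- The brackets `[K, L₁] = −L₁(k)·L₁` and `[K, L̄₁] = −L̄₁(k)·L₁` involving the
Levi-kernel field `K` of General Class IV₂. -/
theorem class_IV₂_K_brackets (hφ : ContDiff ℝ 3 φ)
    (h0 : ∀ p, L1 φ (fun q => conj (A1 φ q)) p - Lb1 φ (A1 φ) p ≠ 0) :
    ∀ f : V5 → ℂ, ContDiff ℝ 2 f → ∀ p,
      (Kof φ (L1 φ f) p - L1 φ (Kof φ f) p = -(L1 φ (kf φ) p) * L1 φ f p) ∧
      (Kof φ (Lb1 φ f) p - Lb1 φ (Kof φ f) p = -(Lb1 φ (kf φ) p) * L1 φ f p) := by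
  intro f hf p
  have hkfd : DifferentiableAt ℝ (kf φ) p :=
    ((contDiff_kf hφ h0).differentiable one_ne_zero) p
  have hL1f : DifferentiableAt ℝ (L1 φ f) p :=
    ((contDiff_L1 hφ le_rfl (hf.of_le (by norm_num))).differentiable one_ne_zero) p
  have hL2f : DifferentiableAt ℝ (L2 φ f) p :=
    ((contDiff_L2 hφ le_rfl (hf.of_le (by norm_num))).differentiable one_ne_zero) p
  constructor
  · have e : Kof φ (L1 φ f) p = kf φ p * L1 φ (L1 φ f) p + L2 φ (L1 φ f) p := rfl
    have e2 : L1 φ (Kof φ f) p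
        = L1 φ (fun q => kf φ q * L1 φ f q + L2 φ f q) p := rfl
    rw [e, e2, L1_add (g := fun q => kf φ q * L1 φ f q) (hkfd.mul hL1f) hL2f, L1_mul hkfd hL1f]
    have hb0 : L2 φ (L1 φ f) p - L1 φ (L2 φ f) p = 0 := by
      rw [bracket_L2L1 hφ hf p, L2A1_eq_L1A2 hφ p]
      ring
    linear_combination hb0
  · have e : Kof φ (Lb1 φ f) p = kf φ p * L1 φ (Lb1 φ f) p + L2 φ (Lb1 φ f) p := rfl
    have e2 : Lb1 φ (Kof φ f) p
        = Lb1 φ (fun q => kf φ q * L1 φ f q + L2 φ f q) p := rfl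
    rw [e, e2, Lb1_add (g := fun q => kf φ q * L1 φ f q) (hkfd.mul hL1f) hL2f, Lb1_mul hkfd hL1f]
    have hb1 := bracket_L1Lb1 hφ hf p
    have hb2 := bracket_L2Lb1 hφ hf p
    have hrel := kf_rel h0 p
    linear_combination kf φ p * hb1 + hb2 + du f p * hrel

end
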